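/- Let τ > 0 and σ > 1, and set M_0 = 1, M_p = p^{τ p^σ} for integers p ≥ 1. Then there exists a constant C > 0 such that for all integers p, q ≥ 0: (p+q)^{τ (p+q)^σ} ≤ C^{p^σ + q^σ} · p^{2^{σ-1} τ p^σ} · q^{2^{σ-1} τ q^σ} (with the convention 0^{τ·0^σ} = 1). -/
import Mathlib

open Real

private lemma aux_convex (x y : ℝ) (hx : 0 ≤ x) (hy : 0 ≤ y) {s : ℝ} (hs : 1 ≤ s) :
    (x + y) ^ s ≤ 2 ^ (s - 1) * (x ^ s + y ^ s) := by
  have h := NNReal.rpow_add_le_mul_rpow_add_rpow x.toNNReal y.toNNReal hs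
  have h' := (NNReal.coe_le_coe).2 h
  simp only [NNReal.coe_rpow, NNReal.coe_mul, NNReal.coe_add, NNReal.coe_ofNat,
    Real.coe_toNNReal _ hx, Real.coe_toNNReal _ hy] at h'
  exact h'

set_option maxHeartbeats 1600000 in
theorem extended_gevrey_M2bar (τ σ : ℝ) (hτ : 0 < τ) (hσ : 1 < σ) :
    ∃ C : ℝ, 0 < C ∧ ∀ p q : ℕ,
      ((p + q : ℕ) : ℝ) ^ (τ * ((p + q : ℕ) : ℝ) ^ σ) ≤
        C ^ ((p : ℝ) ^ σ + (q : ℝ) ^ σ) *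
          (p : ℝ) ^ ((2 : ℝ) ^ (σ - 1) * τ * (p : ℝ) ^ σ) *
          (q : ℝ) ^ ((2 : ℝ) ^ (σ - 1) * τ * (q : ℝ) ^ σ) := by
  set B : ℝ := 2 ^ (σ - 1) with hBdef
  have hB : 0 < B := Real.rpow_pos_of_pos (by norm_num) _
  have hB1 : 1 ≤ B := by
    calc (1 : ℝ) = (2 : ℝ) ^ (0 : ℝ) := (Real.rpow_zero 2).symm
    _ ≤ 2 ^ (σ - 1) := Real.rpow_le_rpow_of_exponent_le (by norm_num) (by linarith)
  set A : ℝ := B * τ with hAdef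
  have hA : 0 < A := mul_pos hB hτ
  set C : ℝ := Real.exp (A * (Real.log 2 + 1)) with hCdef
  have hC : 0 < C := Real.exp_pos _
  have hC1 : 1 ≤ C := Real.one_le_exp (by positivity)
  have hlogC : Real.log C = A * (Real.log 2 + 1) := Real.log_exp _
  refine ⟨C, hC, ?_⟩
  have key : ∀ p q : ℕ, p ≤ q →
      ((p + q : ℕ) : ℝ) ^ (τ * ((p + q : ℕ) : ℝ) ^ σ) ≤
        C ^ ((p : ℝ) ^ σ + (q : ℝ) ^ σ) *
          (p : ℝ) ^ (A * (p : ℝ) ^ σ) * (q : ℝ) ^ (A * (q : ℝ) ^ σ) := by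
    intro p q hpq
    rcases Nat.eq_zero_or_pos p with hp0 | hp1
    · subst hp0
      rcases Nat.eq_zero_or_pos q with hq0 | hq1
      · subst hq0
        norm_num [Real.zero_rpow (by positivity : σ ≠ 0)]
      · have hq1' : (1 : ℝ) ≤ (q : ℝ) := by exact_mod_cast hq1
        have h0 : ((0 : ℕ) : ℝ) ^ (A * ((0 : ℕ) : ℝ) ^ σ) = 1 := by
          norm_num [Real.zero_rpow (by positivity : σ ≠ 0)]
        simp only [Nat.cast_zero, Nat.cast_add, zero_add]
        rw [show ((0:ℕ):ℝ) = (0:ℝ) by norm_num] at h0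
        have hqσ : (0:ℝ) ≤ (q:ℝ) ^ σ := by positivity
        calc ((q : ℝ)) ^ (τ * (q : ℝ) ^ σ) ≤ (q : ℝ) ^ (A * (q : ℝ) ^ σ) := by
              apply Real.rpow_le_rpow_of_exponent_le hq1'
              have : τ ≤ A := by nlinarith
              nlinarith
        _ ≤ C ^ ((0:ℝ) ^ σ + (q : ℝ) ^ σ) * (0:ℝ) ^ (A * (0:ℝ) ^ σ) * (q : ℝ) ^ (A * (q : ℝ) ^ σ) := by
              rw [Real.zero_rpow (by positivity : σ ≠ 0)]
              rw [show A * (0:ℝ) = 0 by ring, Real.rpow_zero, mul_one]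
              nth_rewrite 1 [← one_mul ((q:ℝ) ^ (A * (q : ℝ) ^ σ))]
              apply mul_le_mul_of_nonneg_right _ (Real.rpow_nonneg (by positivity) _)
              apply Real.one_le_rpow hC1 (by positivity)
    · -- 1 ≤ p ≤ q
      have hq1 : 1 ≤ q := le_trans hp1 hpq
      have hp1' : (1 : ℝ) ≤ (p : ℝ) := by exact_mod_cast hp1
      have hq1' : (1 : ℝ) ≤ (q : ℝ) := by exact_mod_cast hq1
      have hpq' : (p : ℝ) ≤ (q : ℝ) := by exact_mod_cast hpq
      have hp0' : (0 : ℝ) < (p : ℝ) := by linarith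
      have hq0' : (0 : ℝ) < (q : ℝ) := by linarith
      set pr := (p : ℝ)
      set qr := (q : ℝ)
      have hsum : ((p + q : ℕ) : ℝ) = pr + qr := by push_cast; ring
      rw [hsum]
      have hpqpos : (0:ℝ) < pr + qr := by linarith
      set S := pr ^ σ with hS
      set Q := qr ^ σ with hQ
      set X := (pr + qr) ^ σ with hX
      -- rewrite everything as exp
      rw [Real.rpow_def_of_pos hpqpos, Real.rpow_def_of_pos hC,
        Real.rpow_def_of_pos hp0', Real.rpow_def_of_pos hq0',
        ← Real.exp_add, ← Real.exp_add, Real.exp_le_exp, hlogC]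
      set Lp := Real.log pr with hLp
      set Lq := Real.log qr with hLq
      have hS0 : 0 ≤ S := Real.rpow_nonneg hp0'.le _
      have hQ0 : 0 ≤ Q := Real.rpow_nonneg hq0'.le _
      have hLp0 : 0 ≤ Lp := Real.log_nonneg hp1'
      have hLq0 : 0 ≤ Lq := Real.log_nonneg hq1'
      have hY0 : 0 ≤ Real.log (pr + qr) := Real.log_nonneg (by linarith)
      have h1 : X ≤ B * (S + Q) := aux_convex pr qr hp0'.le hq0'.le hσ.le
      have h2 : Real.log (pr + qr) ≤ Real.log 2 + Lq := by
        calc Real.log (pr + qr) ≤ Real.log (2 * qr) :=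
              Real.log_le_log (by linarith) (by linarith)
        _ = Real.log 2 + Lq := Real.log_mul (by norm_num) (by linarith)
      have h3 : S * Lq ≤ S * Lp + Q := by
        have ht1 : (1:ℝ) ≤ qr / pr := (one_le_div hp0').2 hpq'
        have ht0 : (0:ℝ) < qr / pr := by linarith
        have hlt : Real.log (qr / pr) ≤ (qr / pr) ^ σ := by
          calc Real.log (qr / pr) ≤ qr / pr - 1 := Real.log_le_sub_one_of_pos ht0
          _ ≤ (qr / pr) ^ (1:ℝ) := by rw [Real.rpow_one]; linarith
          _ ≤ (qr / pr) ^ σ := Real.rpow_le_rpow_of_exponent_le ht1 hσ.le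
        have hdiv : (qr / pr) ^ σ = Q / S := Real.div_rpow hq0'.le hp0'.le σ
        have hSpos : 0 < S := Real.rpow_pos_of_pos hp0' _
        have hlogdiv : Real.log (qr / pr) = Lq - Lp := Real.log_div (by linarith) (by linarith)
        rw [hlogdiv, hdiv] at hlt
        have := mul_le_mul_of_nonneg_left hlt hS0
        rw [mul_div_cancel₀ _ (ne_of_gt hSpos)] at this
        nlinarith
      have step1 : τ * X * Real.log (pr + qr) ≤ τ * (B * (S + Q)) * Real.log (pr + qr) :=
        mul_le_mul_of_nonneg_right (mul_le_mul_of_nonneg_left h1 hτ.le) hY0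
      have step2 : τ * (B * (S + Q)) * Real.log (pr + qr) ≤ τ * (B * (S + Q)) * (Real.log 2 + Lq) :=
        mul_le_mul_of_nonneg_left h2 (by positivity)
      have step3 : τ * (B * (S + Q)) * (Real.log 2 + Lq) ≤
          (S + Q) * (A * (Real.log 2 + 1)) + A * S * Lp + A * Q * Lq := by
        have hh := mul_le_mul_of_nonneg_left h3 (le_of_lt (mul_pos hτ hB))
        rw [hAdef]
        nlinarith
      have main : τ * X * Real.log (pr + qr) ≤
          (S + Q) * (A * (Real.log 2 + 1)) + A * S * Lp + A * Q * Lq :=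
        le_trans (le_trans step1 step2) step3
      clear_value S Q X Lp Lq pr qr A B C
      linarith [main]
  intro p q
  rcases le_total p q with h | h
  · exact key p q h
  · have hk := key q p h
    rw [add_comm q p] at hk
    calc ((p + q : ℕ) : ℝ) ^ (τ * ((p + q : ℕ) : ℝ) ^ σ)
        ≤ C ^ ((q : ℝ) ^ σ + (p : ℝ) ^ σ) * (q : ℝ) ^ (A * (q : ℝ) ^ σ) *
          (p : ℝ) ^ (A * (p : ℝ) ^ σ) := hk
      _ = C ^ ((p : ℝ) ^ σ + (q : ℝ) ^ σ) * (p : ℝ) ^ (A * (p : ℝ) ^ σ) *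
          (q : ℝ) ^ (A * (q : ℝ) ^ σ) := by rw [add_comm ((q:ℝ)^σ)]; ring
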